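/- Let U be a finite nonempty set, α > 0, u* ∈ U, and n ∈ ℕ. For each u ∈ U let T_u be a finite nonempty set of vectors in ℝ^n with nonnegative entries, and define Q(c, u) = min_{μ ∈ T_u} ⟪c, μ⟫ for c ∈ ℝ^n. Suppose that at c₀ ∈ ℝ^n the minimum defining Q(c₀, u) is attained at a unique μ*_u ∈ T_u for every u ∈ U. Then the loss L(c) = −log( exp(−Q(c, u*)/α) / Σ_{u ∈ U} exp(−Q(c, u)/α) ) is differentiable at c₀ with gradient ∇L(c₀) = (1/α) Σ_{u ∈ U} (𝟙{u = u*} − π(u))·μ*_u, where π(u) = exp(−Q(c₀, u)/α) / Σ_{u' ∈ U} exp(−Q(c₀, u')/α). -/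

import Mathlib

open RealInnerProductSpace

/-- Proposition 2 of the paper at a point of differentiability: the gradient of the
negative log-likelihood loss `L(c)` of the expert control `u*` under the Boltzmann
policy built from the piecewise-linear values `Q(c,u) = min_{μ ∈ T_u} ⟪c, μ⟫`,
assuming the minimizers `μ*_u` at `c₀` are unique. -/
theorem stmt_4 {U : Type*} [Fintype U] [Nonempty U] [DecidableEq U]
    (α : ℝ) (hα : 0 < α) (ustar : U) (n : ℕ)
    (T : U → Finset (EuclideanSpace ℝ (Fin n)))
    (hT : ∀ u, (T u).Nonempty)
    (hTnonneg : ∀ u, ∀ μ ∈ T u, ∀ i, 0 ≤ μ i)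
    (Q : EuclideanSpace ℝ (Fin n) → U → ℝ)
    (hQ : ∀ c u, Q c u = (T u).inf' (hT u) (fun μ => ⟪c, μ⟫))
    (c₀ : EuclideanSpace ℝ (Fin n))
    (μstar : U → EuclideanSpace ℝ (Fin n))
    (hmem : ∀ u, μstar u ∈ T u)
    (hmin : ∀ u, ⟪c₀, μstar u⟫ = Q c₀ u)
    (huniq : ∀ u, ∀ μ ∈ T u, ⟪c₀, μ⟫ = Q c₀ u → μ = μstar u)
    (L : EuclideanSpace ℝ (Fin n) → ℝ)
    (hL : ∀ c, L c = -Real.log (Real.exp (-Q c ustar / α) / ∑ u, Real.exp (-Q c u / α)))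
    (pol : U → ℝ)
    (hpol : ∀ u, pol u = Real.exp (-Q c₀ u / α) / ∑ u', Real.exp (-Q c₀ u' / α)) :
    HasGradientAt L
      ((1 / α) • ∑ u, (((if u = ustar then (1 : ℝ) else 0) - pol u) • μstar u)) c₀ := by
  -- Step 1: near c₀, Q c u = ⟪c, μstar u⟫
  have hev : ∀ u, (fun c => Q c u) =ᶠ[nhds c₀] fun c => ⟪c, μstar u⟫ := by
    intro u
    have h1 : ∀ᶠ c in nhds c₀, ∀ μ ∈ T u, ⟪c, μstar u⟫ ≤ ⟪c, μ⟫ := by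
      rw [Filter.eventually_all_finset]
      intro μ hμ
      rcases eq_or_ne μ (μstar u) with h | h
      · subst h; exact Filter.Eventually.of_forall fun c => le_rfl
      · have hlt : ⟪c₀, μstar u⟫ < ⟪c₀, μ⟫ := by
          have hle : Q c₀ u ≤ ⟪c₀, μ⟫ := by
            rw [hQ]; exact Finset.inf'_le _ hμ
          rcases lt_or_eq_of_le hle with h' | h'
          · rw [hmin u]; exact h'
          · exact absurd (huniq u μ hμ h'.symm) h
        have hcont : Continuous fun c : EuclideanSpace ℝ (Fin n) => ⟪c, μ⟫ - ⟪c, μstar u⟫ :=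
          ((continuous_id.inner continuous_const).sub
            (continuous_id.inner continuous_const))
        have := (hcont.continuousAt (x := c₀)).eventually_const_lt
          (u := (0:ℝ)) (by simpa using hlt)
        filter_upwards [this] with c hc
        have hc' : (0:ℝ) < ⟪c, μ⟫ - ⟪c, μstar u⟫ := hc
        linarith
    filter_upwards [h1] with c hc
    rw [hQ]
    exact le_antisymm (Finset.inf'_le _ (hmem u)) (Finset.le_inf' _ _ hc)
  -- Step 2: fderiv of Q(·,u)
  have hQd : ∀ u, HasFDerivAt (fun c => Q c u)
      ((InnerProductSpace.toDual ℝ (EuclideanSpace ℝ (Fin n))) (μstar u)) c₀ := by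
    intro u
    have hlin : HasFDerivAt (fun c : EuclideanSpace ℝ (Fin n) => ⟪c, μstar u⟫)
        ((InnerProductSpace.toDual ℝ (EuclideanSpace ℝ (Fin n))) (μstar u)) c₀ := by
      have : (fun c : EuclideanSpace ℝ (Fin n) => ⟪c, μstar u⟫)
          = fun c => (InnerProductSpace.toDual ℝ (EuclideanSpace ℝ (Fin n))) (μstar u) c := by
        funext c
        simp [InnerProductSpace.toDual_apply_apply, real_inner_comm]
      rw [this]
      exact ((InnerProductSpace.toDual ℝ (EuclideanSpace ℝ (Fin n))) (μstar u)).hasFDerivAt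
    exact hlin.congr_of_eventuallyEq (hev u)
  -- abbreviations
  set g : U → ℝ := fun u => Real.exp (-Q c₀ u / α) with hg
  set S : ℝ := ∑ u, g u with hS
  have hgpos : ∀ u, 0 < g u := fun u => Real.exp_pos _
  have hSpos : 0 < S := Finset.sum_pos (fun u _ => hgpos u) Finset.univ_nonempty
  -- Step 3: fderiv of c ↦ exp(-Q c u / α)
  have hexpd : ∀ u, HasFDerivAt (fun c => Real.exp (-Q c u / α))
      ((g u * -(1/α)) • (InnerProductSpace.toDual ℝ (EuclideanSpace ℝ (Fin n))) (μstar u)) c₀ := by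
    intro u
    have h1 : HasFDerivAt (fun c => -Q c u / α)
        ((-(1/α)) • (InnerProductSpace.toDual ℝ (EuclideanSpace ℝ (Fin n))) (μstar u)) c₀ := by
      have := (hQd u).const_mul (-(1/α))
      convert this using 2 with c
      case e'_11 => ring
      all_goals rfl
    have := h1.exp
    rw [smul_smul] at this
    exact this
  -- Step 4: fderiv of the sum
  have hsumd : HasFDerivAt (fun c => ∑ u, Real.exp (-Q c u / α))
      (∑ u, (g u * -(1/α)) • (InnerProductSpace.toDual ℝ (EuclideanSpace ℝ (Fin n))) (μstar u)) c₀ :=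
    HasFDerivAt.fun_sum (fun u _ => hexpd u)
  -- sum is positive everywhere, nonzero at c₀
  have hSne : (∑ u, Real.exp (-Q c₀ u / α)) ≠ 0 := ne_of_gt hSpos
  -- Step 5: rewrite L
  have hL' : ∀ c, L c = Q c ustar / α + Real.log (∑ u, Real.exp (-Q c u / α)) := by
    intro c
    have hpos : (0:ℝ) < ∑ u, Real.exp (-Q c u / α) :=
      Finset.sum_pos (fun u _ => Real.exp_pos _) Finset.univ_nonempty
    rw [hL c, Real.log_div (Real.exp_ne_zero _) (ne_of_gt hpos), Real.log_exp]
    ring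
  -- Step 6: total fderiv
  have hLd : HasFDerivAt L
      (((1/α) • (InnerProductSpace.toDual ℝ (EuclideanSpace ℝ (Fin n))) (μstar ustar)) +
        S⁻¹ • ∑ u, (g u * -(1/α)) • (InnerProductSpace.toDual ℝ (EuclideanSpace ℝ (Fin n))) (μstar u)) c₀ := by
    have hlog := hsumd.log hSne
    have h1 : HasFDerivAt (fun c => Q c ustar / α)
        ((1/α) • (InnerProductSpace.toDual ℝ (EuclideanSpace ℝ (Fin n))) (μstar ustar)) c₀ := by
      have := (hQd ustar).const_mul (1/α)
      convert this using 2 with c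
      case e'_11 => ring
      all_goals rfl
    have := h1.add hlog
    have heq : (fun c => Q c ustar / α + Real.log (∑ u, Real.exp (-Q c u / α))) = L := by
      funext c; rw [hL' c]
    rw [← heq]
    exact this
  -- Step 7: convert to gradient
  rw [hasGradientAt_iff_hasFDerivAt]
  convert hLd using 1
  · rfl
  · rfl
  apply ContinuousLinearMap.ext
  intro x
  simp only [InnerProductSpace.toDual_apply_apply, ContinuousLinearMap.add_apply,
    ContinuousLinearMap.smul_apply, ContinuousLinearMap.sum_apply,
    real_inner_smul_left, sum_inner, inner_sum, smul_eq_mul]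
  have hsum1 : ∑ u, ((if u = ustar then (1:ℝ) else 0) - pol u) * ⟪μstar u, x⟫
      = ⟪μstar ustar, x⟫ - ∑ u, pol u * ⟪μstar u, x⟫ := by
    simp only [sub_mul, Finset.sum_sub_distrib, ite_mul, one_mul, zero_mul]
    rw [Finset.sum_ite_eq' Finset.univ ustar fun u => ⟪μstar u, x⟫]
    simp
  rw [hsum1]
  have hpol' : ∀ u, pol u * ⟪μstar u, x⟫ = g u / S * ⟪μstar u, x⟫ := fun u => by
    rw [hpol u]
  simp only [hpol']
  have h2 : ∑ u, (g u * -(1/α)) * ⟪μstar u, x⟫ = -(1/α) * ∑ u, g u * ⟪μstar u, x⟫ := by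
    rw [Finset.mul_sum]; exact Finset.sum_congr rfl fun u _ => by ring
  have h3 : ∑ u, g u / S * ⟪μstar u, x⟫ = S⁻¹ * ∑ u, g u * ⟪μstar u, x⟫ := by
    rw [Finset.mul_sum]; exact Finset.sum_congr rfl fun u _ => by ring
  rw [h2, h3, mul_sub]
  ring
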